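/- Let (α, β) : (∂ : N → S) → (∂ : M → R) be a morphism of crossed bimodules. Equip E = S ⊕ M with the multiplication (s, m)(s', m') = (ss', α(s)m' + m α(s') + m·∂m'), where M is an S-bimodule via α. Define ι(m) = (0, m), π(s, m) = s, κ(n) = (∂n, −β(n)), j(s, m) = α(s) + ∂m. Then E is an associative ring, π and j are ring homomorphisms, 0 → M → E → S → 0 is exact, j∘κ = 0, and the four butterfly compatibility conditions hold; i.e., these data form a bimodule butterfly from (N → S) to (M → R), split by the ring homomorphism σ = (id_S, 0) : S → E. -/

import Mathlib

/-- A bimodule structure: left and right actions of a ring `R` on an abelian group `M`. -/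
structure BimoduleStr (R : Type*) (M : Type*) [Ring R] [AddCommGroup M] where
  sl : R → M → M
  sr : M → R → M
  sl_add : ∀ r m m', sl r (m + m') = sl r m + sl r m'
  add_sl : ∀ r r' m, sl (r + r') m = sl r m + sl r' m
  mul_sl : ∀ r r' m, sl (r * r') m = sl r (sl r' m)
  one_sl : ∀ m, sl 1 m = m
  sr_add : ∀ m m' r, sr (m + m') r = sr m r + sr m' r
  add_sr : ∀ m r r', sr m (r + r') = sr m r + sr m r'
  mul_sr : ∀ m r r', sr m (r * r') = sr (sr m r) r'
  one_sr : ∀ m, sr m 1 = m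
  sl_sr : ∀ r m r', sl r (sr m r') = sr (sl r m) r'

/-- A crossed bimodule: an `R`-bimodule map `∂ : M → R` satisfying the Pfeiffer identity. -/
structure CrossedBimodule (R : Type*) (M : Type*) [Ring R] [AddCommGroup M] extends
    BimoduleStr R M where
  d : M →+ R
  d_sl : ∀ r m, d (sl r m) = r * d m
  d_sr : ∀ m r, d (sr m r) = d m * r
  pfeiffer : ∀ m m', sl (d m) m' = sr m (d m')


section Aux
variable {R : Type*} {M : Type*} [Ring R] [AddCommGroup M] (B : BimoduleStr R M)

lemma BimoduleStr.sl_zero' (r : R) : B.sl r 0 = 0 := by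
  have h := B.sl_add r 0 0
  rw [add_zero] at h
  nth_rewrite 1 [← add_zero (B.sl r 0)] at h
  exact (add_left_cancel h).symm

lemma BimoduleStr.zero_sl (m : M) : B.sl 0 m = 0 := by
  have h := B.add_sl 0 0 m
  rw [add_zero] at h
  nth_rewrite 1 [← add_zero (B.sl 0 m)] at h
  exact (add_left_cancel h).symm

lemma BimoduleStr.sr_zero' (m : M) : B.sr m 0 = 0 := by
  have h := B.add_sr m 0 0
  rw [add_zero] at h
  nth_rewrite 1 [← add_zero (B.sr m 0)] at h
  exact (add_left_cancel h).symm

lemma BimoduleStr.zero_sr (r : R) : B.sr 0 r = 0 := by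
  have h := B.sr_add 0 0 r
  rw [add_zero] at h
  nth_rewrite 1 [← add_zero (B.sr 0 r)] at h
  exact (add_left_cancel h).symm

lemma BimoduleStr.sl_neg' (r : R) (m : M) : B.sl r (-m) = -(B.sl r m) := by
  have h := B.sl_add r m (-m)
  rw [add_neg_cancel, B.sl_zero'] at h
  exact eq_neg_of_add_eq_zero_right h.symm

lemma BimoduleStr.sr_neg' (m : M) (r : R) : B.sr m (-r) = -(B.sr m r) := by
  have h := B.add_sr m r (-r)
  rw [add_neg_cancel, B.sr_zero'] at h
  exact eq_neg_of_add_eq_zero_right h.symm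

lemma BimoduleStr.neg_sr' (m : M) (r : R) : B.sr (-m) r = -(B.sr m r) := by
  have h := B.sr_add m (-m) r
  rw [add_neg_cancel, B.zero_sr] at h
  exact eq_neg_of_add_eq_zero_right h.symm

end Aux

/-- a morphism `(α, β)` of crossed bimodules gives rise to a split bimodule
butterfly with centerpiece `E = S ⊕ M`, product `(s,m)(s',m') = (ss', α(s)m' + mα(s') + m∂m')`,
and structure maps `ι(m) = (0,m)`, `π(s,m) = s`, `κ(n) = (∂n, −β(n))`, `j(s,m) = α(s) + ∂m`,
split by the ring homomorphism `σ = (id_S, 0)`. -/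
theorem stmt16 {S N R M : Type*} [Ring S] [AddCommGroup N] [Ring R] [AddCommGroup M]
    (CS : CrossedBimodule S N) (CR : CrossedBimodule R M)
    (α : S →+* R) (β : N →+ M)
    (hd : ∀ n, CR.d (β n) = α (CS.d n))
    (heql : ∀ s n, β (CS.sl s n) = CR.sl (α s) (β n))
    (heqr : ∀ n s, β (CS.sr n s) = CR.sr (β n) (α s)) :
    let mul : S × M → S × M → S × M := fun p q =>
      (p.1 * q.1, CR.sl (α p.1) q.2 + CR.sr p.2 (α q.1) + CR.sr p.2 (CR.d q.2))
    let ι : M → S × M := fun m => (0, m)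
    let π : S × M → S := fun p => p.1
    let κ : N → S × M := fun n => (CS.d n, -(β n))
    let j : S × M → R := fun p => α p.1 + CR.d p.2
    -- `E = S ⊕ M` is an associative unital ring
    (∀ p q u, mul (mul p q) u = mul p (mul q u)) ∧
    (∀ p, mul (1, 0) p = p) ∧ (∀ p, mul p (1, 0) = p) ∧
    (∀ p q u, mul p (q + u) = mul p q + mul p u) ∧
    (∀ p q u, mul (p + q) u = mul p u + mul q u) ∧
    -- `π` and `j` are ring homomorphisms
    (∀ p q, π (mul p q) = π p * π q) ∧ (∀ p q, π (p + q) = π p + π q) ∧ π (1, 0) = 1 ∧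
    (∀ p q, j (mul p q) = j p * j q) ∧ (∀ p q, j (p + q) = j p + j q) ∧ j (1, 0) = 1 ∧
    -- `0 → M → E → S → 0` is exact
    Function.Injective ι ∧ (∀ p, π p = 0 ↔ ∃ m, ι m = p) ∧ Function.Surjective π ∧
    -- `N → E → R` is a complex, compatible with the differentials
    (∀ n, j (κ n) = 0) ∧ (∀ n, π (κ n) = CS.d n) ∧ (∀ m, j (ι m) = CR.d m) ∧
    -- the four butterfly compatibility conditions
    (∀ m p, ι (CR.sr m (j p)) = mul (ι m) p) ∧
    (∀ m p, ι (CR.sl (j p) m) = mul p (ι m)) ∧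
    (∀ n p, κ (CS.sr n (π p)) = mul (κ n) p) ∧
    (∀ n p, κ (CS.sl (π p) n) = mul p (κ n)) ∧
    -- `σ = (id_S, 0)` is a splitting ring homomorphism
    (∀ s s', mul (s, 0) (s', 0) = ((s * s' : S), (0 : M))) ∧
    (∀ s s' : S, ((s, 0) : S × M) + (s', 0) = (s + s', 0)) ∧
    (∀ s : S, π (s, 0) = s) := by
  intro mul ι π κ j
  have slz := CR.toBimoduleStr.sl_zero'
  have zsl := CR.toBimoduleStr.zero_sl
  have srz := CR.toBimoduleStr.sr_zero'
  have zsr := CR.toBimoduleStr.zero_sr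
  have sln := CR.toBimoduleStr.sl_neg'
  have nsr := CR.toBimoduleStr.neg_sr'
  refine ⟨?_, ?_, ?_, ?_, ?_, ?_, ?_, ?_, ?_, ?_, ?_, ?_, ?_, ?_, ?_, ?_, ?_, ?_, ?_, ?_, ?_, ?_, ?_, ?_⟩
  · intro p q u
    simp only [mul, Prod.mk.injEq, mul_assoc, true_and]
    simp only [map_mul, CR.sl_add, CR.sr_add, CR.add_sl, CR.add_sr, CR.mul_sl, CR.mul_sr, CR.sl_sr, map_add,
      CR.d_sl, CR.d_sr]
    abel
  · intro p
    simp [mul, slz, zsl, srz, zsr, CR.one_sl, CR.one_sr]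
  · intro p
    simp [mul, slz, zsl, srz, zsr, CR.one_sl, CR.one_sr]
  · intro p q u
    simp only [mul, Prod.fst_add, Prod.snd_add, Prod.mk_add_mk, Prod.mk.injEq, mul_add,
      true_and, CR.sl_add, CR.sr_add, CR.add_sr, map_add]
    abel
  · intro p q u
    simp only [mul, Prod.fst_add, Prod.snd_add, Prod.mk_add_mk, Prod.mk.injEq, add_mul,
      true_and, CR.add_sl, CR.sr_add, map_add]
    abel
  · intro p q; rfl
  · intro p q; rfl
  · rfl
  · intro p q
    simp only [mul, j, map_mul, map_add, CR.d_sl, CR.d_sr]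
    noncomm_ring
  · intro p q
    simp only [j, Prod.fst_add, Prod.snd_add, map_add]
    abel
  · simp [j]
  · intro m m' h
    simpa [ι, Prod.ext_iff] using h
  · intro p
    constructor
    · intro h
      exact ⟨p.2, by simp [ι, Prod.ext_iff, h.symm]; rfl⟩
    · rintro ⟨m, rfl⟩; rfl
  · intro s; exact ⟨(s, 0), rfl⟩
  · intro n
    simp [j, κ, hd n]
  · intro n; rfl
  · intro m
    simp [j, ι]
  · intro m p
    simp only [ι, mul, j, Prod.mk.injEq, map_zero, zsl, zero_mul, zero_add, CR.add_sr,
      true_and]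
  · intro m p
    simp only [ι, mul, j, Prod.mk.injEq, map_zero, mul_zero, slz, srz, CR.sl_add, add_zero,
      true_and]
    rw [CR.add_sl, CR.pfeiffer]
  · intro n p
    simp only [κ, mul, π, Prod.mk.injEq, CS.d_sr, true_and, heqr, nsr]
    rw [← hd n, ← CR.pfeiffer]
    abel
  · intro n p
    simp only [κ, mul, π, Prod.mk.injEq, CS.d_sl, true_and, heql, sln]
    rw [← hd n, map_neg, CR.toBimoduleStr.sr_neg']
    abel
  · intro s s'
    simp [mul, slz, zsr, srz]
  · intro s s'
    simp
  · intro s; rfl
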